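/- Assume (H1) and let 0 < l ≤ h. If x : (1,1+l] → ℝ is continuous and satisfies |(log t)^{1-γ} x(t) - x₀| ≤ b for all t ∈ (1,1+l], then lim_{t→1⁺} (log t)^{1-γ} · (1/Γ(α)) ∫₁ᵗ (log(t/s))^{α-1} f(s, x(s)) ds/s = 0. -/

import Mathlib

open Real MeasureTheory intervalIntegral Set Filter

lemma beta_integrableOn_aux {p q : ℝ} (hp : -1 < p) (hq : -1 < q) :
    IntegrableOn (fun v : ℝ => (1 - v) ^ p * v ^ q) (Set.Ioo (0:ℝ) 1) := by
  have h := (Complex.betaIntegral_convergent (u := (q : ℂ) + 1) (v := (p : ℂ) + 1)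
      (by simp; linarith) (by simp; linarith)).norm
  rw [intervalIntegrable_iff_integrableOn_Ioo_of_le zero_le_one] at h
  refine h.congr_fun (fun v hv => ?_) measurableSet_Ioo
  obtain ⟨hv0, hv1⟩ := hv
  have h1v : (0:ℝ) < 1 - v := by linarith
  simp only [norm_mul, add_sub_cancel_right]
  have e1 : ‖(v:ℂ) ^ (q:ℂ)‖ = v ^ q := by
    rw [Complex.norm_cpow_eq_rpow_re_of_pos hv0, Complex.ofReal_re]
  have e2 : ‖(1 - (v:ℂ)) ^ (p:ℂ)‖ = (1 - v) ^ p := by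
    rw [show (1 - (v:ℂ)) = ((1 - v : ℝ) : ℂ) by push_cast; ring,
      Complex.norm_cpow_eq_rpow_re_of_pos h1v, Complex.ofReal_re]
  rw [e1, e2]; ring

theorem weighted_integral_tendsto_zero (α β γ x₀ h b M k : ℝ) (f : ℝ → ℝ → ℝ)
    (hα0 : 0 < α) (hα1 : α < 1) (hβ0 : 0 ≤ β) (hβ1 : β ≤ 1)
    (hγ : γ = α + β * (1 - α))
    (hh : 0 < h) (hb : 0 < b) (hM : 0 ≤ M) (hk : β * (1 - α) - 1 < k)
    (H1cont : ∀ t ∈ Set.Ioc (1:ℝ) (1 + h),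
      ContinuousOn (fun x : ℝ => f t (Real.log t ^ (γ - 1) * x)) (Set.Icc (x₀ - b) (x₀ + b)))
    (H1meas : ∀ x ∈ Set.Icc (x₀ - b) (x₀ + b),
      AEMeasurable (fun t : ℝ => f t (Real.log t ^ (γ - 1) * x))
        (MeasureTheory.volume.restrict (Set.Ioc (1:ℝ) (1 + h))))
    (H1bdd : ∀ t ∈ Set.Ioc (1:ℝ) (1 + h), ∀ x ∈ Set.Icc (x₀ - b) (x₀ + b),
      |f t (Real.log t ^ (γ - 1) * x)| ≤ M * Real.log t ^ k)
    (l : ℝ) (hl0 : 0 < l) (hlh : l ≤ h)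
    (x : ℝ → ℝ) (hxc : ContinuousOn x (Set.Ioc 1 (1 + l)))
    (hxb : ∀ t ∈ Set.Ioc (1:ℝ) (1 + l), |Real.log t ^ (1 - γ) * x t - x₀| ≤ b) :
    Filter.Tendsto
      (fun t : ℝ => Real.log t ^ (1 - γ) *
        ((1 / Real.Gamma α) * ∫ s in (1:ℝ)..t, Real.log (t / s) ^ (α - 1) * f s (x s) / s))
      (nhdsWithin 1 (Set.Ioi 1)) (nhds 0) := by
  have hβα : 0 ≤ β * (1 - α) := mul_nonneg hβ0 (by linarith)
  have hk1 : -1 < k := by linarith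
  have hεpos : 0 < α + k + 1 - γ := by rw [hγ]; linarith
  have hΓ : 0 < Real.Gamma α := Real.Gamma_pos_of_pos hα0
  set B : ℝ := ∫ v in Set.Ioo (0:ℝ) 1, (1 - v) ^ (α - 1) * v ^ k with hBdef
  have hBint := beta_integrableOn_aux (p := α - 1) (q := k) (by linarith) hk1
  have hBnn : 0 ≤ B := setIntegral_nonneg measurableSet_Ioo fun v hv =>
    mul_nonneg (Real.rpow_nonneg (by linarith [hv.2]) _) (Real.rpow_nonneg hv.1.le _)
  have key : ∀ t ∈ Set.Ioc (1:ℝ) (1 + l),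
      ‖Real.log t ^ (1 - γ) * ((1 / Real.Gamma α) *
        ∫ s in (1:ℝ)..t, Real.log (t / s) ^ (α - 1) * f s (x s) / s)‖
        ≤ (M * B / Real.Gamma α) * Real.log t ^ (α + k + 1 - γ) := by
    rintro t ⟨ht1, htl⟩
    have ht0 : (0:ℝ) < t := by linarith
    set τ := Real.log t with hτdef
    have hτ : 0 < τ := Real.log_pos ht1
    set g₀ : ℝ → ℝ := fun s => Real.log (t / s) ^ (α - 1) * (M * Real.log s ^ k) / s with hg₀
    have hbound : ∀ s ∈ Set.Ioc (1:ℝ) t,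
        ‖Real.log (t / s) ^ (α - 1) * f s (x s) / s‖ ≤ g₀ s := by
      rintro s ⟨hs1, hst⟩
      have hs0 : (0:ℝ) < s := by linarith
      have hls : 0 < Real.log s := Real.log_pos hs1
      have hsl : s ∈ Set.Ioc (1:ℝ) (1 + l) := ⟨hs1, hst.trans htl⟩
      have hsh : s ∈ Set.Ioc (1:ℝ) (1 + h) := ⟨hs1, hst.trans (by linarith)⟩
      have hX : Real.log s ^ (1 - γ) * x s ∈ Set.Icc (x₀ - b) (x₀ + b) := by
        have hb' := hxb s hsl
        rw [abs_le] at hb'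
        constructor <;> linarith [hb'.1, hb'.2]
      have hfb := H1bdd s hsh _ hX
      have hxs : Real.log s ^ (γ - 1) * (Real.log s ^ (1 - γ) * x s) = x s := by
        rw [← mul_assoc, ← Real.rpow_add hls]
        norm_num
      rw [hxs] at hfb
      have hlog_ts : 0 ≤ Real.log (t / s) := Real.log_nonneg (by
        rw [le_div_iff₀ hs0]; linarith)
      have hr : 0 ≤ Real.log (t / s) ^ (α - 1) := Real.rpow_nonneg hlog_ts _
      simp only [hg₀]
      rw [Real.norm_eq_abs, abs_div, abs_mul, abs_of_nonneg hr, abs_of_pos hs0]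
      exact (div_le_div_iff_of_pos_right hs0).mpr (mul_le_mul_of_nonneg_left hfb hr)
    set φ : ℝ → ℝ := fun v => Real.exp (v * τ) with hφ
    have himg : φ '' Set.Ioo 0 1 = Set.Ioo 1 t := by
      ext s
      constructor
      · rintro ⟨v, ⟨hv0, hv1⟩, rfl⟩
        simp only [hφ]
        constructor
        · rw [show (1:ℝ) = Real.exp 0 from (Real.exp_zero).symm]
          exact Real.exp_lt_exp.mpr (mul_pos hv0 hτ)
        · rw [show t = Real.exp τ from (Real.exp_log ht0).symm]
          exact Real.exp_lt_exp.mpr (by nlinarith)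
      · rintro ⟨hs1, hst⟩
        have hs0 : (0:ℝ) < s := by linarith
        refine ⟨Real.log s / τ, ⟨div_pos (Real.log_pos hs1) hτ, ?_⟩, ?_⟩
        · rw [div_lt_one hτ]
          exact Real.log_lt_log hs0 hst
        · simp only [hφ]
          rw [div_mul_cancel₀ _ hτ.ne', Real.exp_log hs0]
    have hderiv : ∀ v ∈ Set.Ioo (0:ℝ) 1,
        HasDerivWithinAt φ (τ * Real.exp (v * τ)) (Set.Ioo (0:ℝ) 1) v := by
      intro v _
      have h1 : HasDerivAt (fun v : ℝ => v * τ) τ v := hasDerivAt_mul_const τ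
      have h2 := (Real.hasDerivAt_exp (v * τ)).comp v h1
      exact HasDerivAt.hasDerivWithinAt (by rw [mul_comm τ]; exact h2)
    have hinj : Set.InjOn φ (Set.Ioo 0 1) := fun a _ c _ hac => by
      have := Real.exp_injective hac
      exact mul_right_cancel₀ hτ.ne' this
    have hcomp : ∀ v ∈ Set.Ioo (0:ℝ) 1,
        |τ * Real.exp (v * τ)| • g₀ (Real.exp (v * τ))
          = (M * τ ^ (α + k)) * ((1 - v) ^ (α - 1) * v ^ k) := by
      rintro v ⟨hv0, hv1⟩
      have hv1' : (0:ℝ) < 1 - v := by linarith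
      have hexp : (0:ℝ) < Real.exp (v * τ) := Real.exp_pos _
      have hlog1 : Real.log (Real.exp (v * τ)) = v * τ := Real.log_exp _
      have hlog2 : Real.log (t / Real.exp (v * τ)) = (1 - v) * τ := by
        rw [Real.log_div ht0.ne' (Real.exp_ne_zero _), hlog1, hτdef]; ring
      have habs : |τ * Real.exp (v * τ)| = τ * Real.exp (v * τ) :=
        abs_of_pos (mul_pos hτ hexp)
      simp only [hg₀, smul_eq_mul, habs, hlog1, hlog2]
      rw [Real.mul_rpow hv1'.le hτ.le, Real.mul_rpow hv0.le hτ.le,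
        show α + k = 1 + (α - 1) + k by ring, Real.rpow_add hτ, Real.rpow_add hτ,
        Real.rpow_one]
      field_simp
    have hIoo : IntegrableOn g₀ (Set.Ioo (1:ℝ) t) := by
      rw [← himg,
        integrableOn_image_iff_integrableOn_abs_deriv_smul measurableSet_Ioo hderiv hinj]
      exact IntegrableOn.congr_fun (hBint.const_mul (M * τ ^ (α + k)))
        (fun v hv => (hcomp v hv).symm) measurableSet_Ioo
    have hIeq : ∫ s in Set.Ioo (1:ℝ) t, g₀ s = M * τ ^ (α + k) * B := by
      rw [← himg,
        integral_image_eq_integral_abs_deriv_smul measurableSet_Ioo hderiv hinj,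
        setIntegral_congr_fun measurableSet_Ioo hcomp, MeasureTheory.integral_const_mul]
    have hII : IntervalIntegrable g₀ volume 1 t := by
      rw [intervalIntegrable_iff_integrableOn_Ioo_of_le ht1.le]; exact hIoo
    have hJ : ‖∫ s in (1:ℝ)..t, Real.log (t / s) ^ (α - 1) * f s (x s) / s‖
        ≤ M * τ ^ (α + k) * B := by
      have hae : ∀ᵐ s ∂(volume.restrict (Set.uIoc (1:ℝ) t)),
          ‖Real.log (t / s) ^ (α - 1) * f s (x s) / s‖ ≤ g₀ s := by
        rw [Set.uIoc_of_le ht1.le]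
        exact (ae_restrict_iff' measurableSet_Ioc).mpr (Filter.Eventually.of_forall hbound)
      have h1 := intervalIntegral.norm_integral_le_abs_of_norm_le hae hII
      refine h1.trans_eq ?_
      rw [intervalIntegral.integral_of_le ht1.le, MeasureTheory.integral_Ioc_eq_integral_Ioo,
        hIeq]
      exact abs_of_nonneg (mul_nonneg (mul_nonneg hM (Real.rpow_nonneg hτ.le _)) hBnn)
    have h1Γ : (0:ℝ) ≤ 1 / Real.Gamma α := by positivity
    have hτγ : (0:ℝ) ≤ τ ^ (1 - γ) := Real.rpow_nonneg hτ.le _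
    calc ‖τ ^ (1 - γ) * ((1 / Real.Gamma α) *
            ∫ s in (1:ℝ)..t, Real.log (t / s) ^ (α - 1) * f s (x s) / s)‖
        = τ ^ (1 - γ) * ((1 / Real.Gamma α) *
            ‖∫ s in (1:ℝ)..t, Real.log (t / s) ^ (α - 1) * f s (x s) / s‖) := by
          rw [norm_mul, norm_mul, Real.norm_eq_abs, Real.norm_eq_abs,
            abs_of_nonneg hτγ, abs_of_nonneg h1Γ]
      _ ≤ τ ^ (1 - γ) * ((1 / Real.Gamma α) * (M * τ ^ (α + k) * B)) :=
          mul_le_mul_of_nonneg_left (mul_le_mul_of_nonneg_left hJ h1Γ) hτγ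
      _ = (M * B / Real.Gamma α) * τ ^ (α + k + 1 - γ) := by
          rw [show α + k + 1 - γ = (1 - γ) + (α + k) by ring,
            Real.rpow_add hτ (1 - γ) (α + k)]
          ring
  have hev : ∀ᶠ t in nhdsWithin (1:ℝ) (Set.Ioi 1),
      ‖Real.log t ^ (1 - γ) * ((1 / Real.Gamma α) *
        ∫ s in (1:ℝ)..t, Real.log (t / s) ^ (α - 1) * f s (x s) / s)‖
        ≤ (M * B / Real.Gamma α) * Real.log t ^ (α + k + 1 - γ) := by
    filter_upwards [Ioc_mem_nhdsGT_of_mem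
      (show (1:ℝ) ∈ Set.Ico (1:ℝ) (1 + l) from ⟨le_refl _, by linarith⟩)] with t ht
    exact key t ht
  refine squeeze_zero_norm' hev ?_
  have h1 : Tendsto Real.log (nhdsWithin 1 (Set.Ioi 1)) (nhds 0) := by
    have h2 := (Real.continuousAt_log one_ne_zero).tendsto
    rw [Real.log_one] at h2
    exact h2.mono_left nhdsWithin_le_nhds
  have h2 : Tendsto (fun u : ℝ => u ^ (α + k + 1 - γ)) (nhds (0:ℝ)) (nhds 0) := by
    have h3 := (Real.continuousAt_rpow_const 0 (α + k + 1 - γ) (Or.inr hεpos.le)).tendsto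
    rwa [Real.zero_rpow hεpos.ne'] at h3
  have h4 := (h2.comp h1).const_mul (M * B / Real.Gamma α)
  simpa [Function.comp] using h4
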